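/- Let E be a real inner product space, let N, m, M ≥ 1, and let γ : ℝ → ℝ be strictly increasing with γ(0) = 0. Fix a robot index i ∈ {1,…,N}, its position x ∈ E, a vector v̂ ∈ E with ‖v̂‖ ≤ u_max for some u_max > 0, a penalty parameter ϖ ≥ 0, desired points x_1^d, …, x_N^d ∈ E with x ≠ x_k^d for all k, neighbor positions x_1, …, x_m ∈ E with ‖x − x_j‖ ≥ r for all j (where r > 0), and obstacle centers x_1^o, …, x_M^o ∈ E with radii r_l^o ≥ 0 satisfying ‖x − x_l^o‖ ≥ r + r_l^o for all l. Then there exist u ∈ E, δ ∈ ℝ^N with all entries nonnegative, and an allocation row vector α_i ∈ {0,1}^N with exactly one entry equal to 1 (namely u = v̂, α_i the i-th standard basis vector, and δ_k sufficiently large), such that all constraints of the CATE optimization hold: (i) for every k ∈ {1,…,N}: ⟨(x − x_k^d)/‖x − x_k^d‖, u − v̂⟩ + γ(‖x − x_k^d‖) − (1 − α_{i,k})·ϖ − δ_k ≤ 0; (ii) for every neighbor j: ⟨−(x − x_j)/‖x − x_j‖, u − v̂⟩ + γ(r − ‖x − x_j‖) ≤ 0; (iii) for every obstacle l: ⟨−(x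 − x_l^o)/‖x − x_l^o‖, u − v̂⟩ + γ(r + r_l^o − ‖x − x_l^o‖) ≤ 0; (iv) Σ_k α_{i,k} = 1; and (v) ‖u‖ ≤ u_max. -/

import Mathlib

/-- Feasibility guarantee of the CATE optimization: under Assumptions A3 and
A4, there always exist an input u, nonnegative slack variables δ, and a 0-1
allocation row with exactly one entry equal to 1 satisfying all the CBF,
allocation, and input-limit constraints (e.g. u = v̂, α_i the i-th standard
basis vector, and δ sufficiently large). -/
theorem stmt_15 {E : Type*} [NormedAddCommGroup E] [InnerProductSpace ℝ E]
    (N m M : ℕ) (hN : 1 ≤ N) (hm : 1 ≤ m) (hM : 1 ≤ M)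
    (γ : ℝ → ℝ) (hγ : StrictMono γ) (hγ0 : γ 0 = 0)
    (i : Fin N) (x vhat : E) (umax : ℝ) (humax : 0 < umax)
    (hvhat : ‖vhat‖ ≤ umax) (ϖ : ℝ) (hϖ : 0 ≤ ϖ) (r : ℝ) (hr : 0 < r)
    (xd : Fin N → E) (hxd : ∀ k, x ≠ xd k)
    (xn : Fin m → E) (hxn : ∀ j, r ≤ ‖x - xn j‖)
    (xo : Fin M → E) (ro : Fin M → ℝ) (hro : ∀ l, 0 ≤ ro l)
    (hxo : ∀ l, r + ro l ≤ ‖x - xo l‖) :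
    ∃ (u : E) (δ : Fin N → ℝ) (αrow : Fin N → ℝ),
      (∀ k, 0 ≤ δ k) ∧
      (∀ k, αrow k = 0 ∨ αrow k = 1) ∧
      (∀ k, (inner ℝ (‖x - xd k‖⁻¹ • (x - xd k)) (u - vhat) : ℝ) +
        γ ‖x - xd k‖ - (1 - αrow k) * ϖ - δ k ≤ 0) ∧
      (∀ j, (inner ℝ (-(‖x - xn j‖⁻¹ • (x - xn j))) (u - vhat) : ℝ) +
        γ (r - ‖x - xn j‖) ≤ 0) ∧
      (∀ l, (inner ℝ (-(‖x - xo l‖⁻¹ • (x - xo l))) (u - vhat) : ℝ) +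
        γ (r + ro l - ‖x - xo l‖) ≤ 0) ∧
      (∑ k, αrow k = 1) ∧
      ‖u‖ ≤ umax := by
  refine ⟨vhat, fun k => max 0 (γ ‖x - xd k‖), fun k => if k = i then 1 else 0,
    fun k => le_max_left _ _, fun k => by by_cases h : k = i <;> simp [h], ?_, ?_, ?_, ?_, hvhat⟩
  · intro k
    simp only [sub_self, inner_zero_right]
    have h1 : γ ‖x - xd k‖ ≤ max 0 (γ ‖x - xd k‖) := le_max_right _ _
    have h2 : 0 ≤ (1 - if k = i then (1:ℝ) else 0) * ϖ := by
      by_cases h : k = i <;> simp [h, hϖ]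
    linarith
  · intro j
    simp only [sub_self, inner_zero_right]
    have : γ (r - ‖x - xn j‖) ≤ γ 0 := hγ.monotone (by linarith [hxn j])
    linarith [hγ0 ▸ this]
  · intro l
    simp only [sub_self, inner_zero_right]
    have : γ (r + ro l - ‖x - xo l‖) ≤ γ 0 := hγ.monotone (by linarith [hxo l])
    linarith [hγ0 ▸ this]
  · simp
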